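/- arXiv:math/0507034 — 3 statements merged into one kernel-verified Lean document; each statement's English description precedes it below -/
import Mathlib

section
/- For all β > 0 and γ > 0, the integral ∫₀^∞ t^{-3/2} exp(-(βt + γ/t)/2) dt equals √(2π/γ) · exp(-√(βγ)). -/
open MeasureTheory Real Set

lemma gauss_half' : (∫ x : ℝ, exp (-(x^2/2))) = Real.sqrt (2*π) := by
  have h := integral_gaussian (1/2 : ℝ)
  simp only [show ∀ x : ℝ, -(1/2 : ℝ) * x^2 = -(x^2/2) from fun x => by ring] at h
  rw [h]; norm_num [mul_comm]

set_option maxHeartbeats 1000000 in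
lemma J_integrable' {c : ℝ} (hc : 0 < c) :
    IntegrableOn (fun s : ℝ => exp (-((s^2 + c^2/s^2)/2))) (Ioi 0) := by
  have hint : IntegrableOn (fun s : ℝ => exp (-(1/2 : ℝ) * s^2)) (Ioi 0) :=
    (integrable_exp_neg_mul_sq (by norm_num : (0:ℝ) < 1/2)).integrableOn
  have hmeas : AEStronglyMeasurable (fun s : ℝ => exp (-((s^2 + c^2/s^2)/2)))
      (volume.restrict (Ioi 0)) := by
    apply Measurable.aestronglyMeasurable
    fun_prop
  refine Integrable.mono hint hmeas ?_
  · filter_upwards [ae_restrict_mem measurableSet_Ioi] with s hs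
    simp only [Real.norm_eq_abs, abs_exp]
    apply exp_le_exp.mpr
    have hs0 : (0:ℝ) < s := hs
    have : 0 ≤ c^2/s^2 := by positivity
    nlinarith

lemma inv_trick' {c : ℝ} (hc : 0 < c) :
    ((∫ s in Ioi (0:ℝ), exp (-((s^2 + c^2/s^2)/2)))
      = ∫ s in Ioi (0:ℝ), (c/s^2) * exp (-((s^2 + c^2/s^2)/2))) ∧
    IntegrableOn (fun s : ℝ => (c/s^2) * exp (-((s^2 + c^2/s^2)/2))) (Ioi 0) := by
  set g : ℝ → ℝ := fun s => exp (-((s^2 + c^2/s^2)/2)) with hg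
  have hderiv : ∀ s ∈ Ioi (0:ℝ), HasDerivWithinAt (fun y => c / y) (-(c / s^2)) (Ioi 0) s := by
    intro s hs
    have hs0 : s ≠ 0 := ne_of_gt hs
    have h := (hasDerivAt_inv hs0).const_mul c
    exact (by simpa [div_eq_mul_inv, neg_mul, mul_comm] using h :
      HasDerivAt (fun y => c / y) (-(c / s^2)) s).hasDerivWithinAt
  have hinj : InjOn (fun y => c / y) (Ioi 0) := by
    intro x hx y hy hxy
    have hx0 : (0:ℝ) < x := hx
    have hy0 : (0:ℝ) < y := hy
    simp only at hxy
    have h' : c * x⁻¹ = c * y⁻¹ := by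
      simpa [div_eq_mul_inv] using hxy
    exact inv_injective (mul_left_cancel₀ (ne_of_gt hc) h')
  have himg : (fun y => c / y) '' (Ioi 0) = Ioi (0:ℝ) := by
    ext x
    simp only [mem_image, mem_Ioi]
    constructor
    · rintro ⟨y, hy, rfl⟩; exact div_pos hc hy
    · intro hx; exact ⟨c / x, div_pos hc hx, by field_simp⟩
  have hcomp : ∀ s ∈ Ioi (0:ℝ), g (c / s) = g s := by
    intro s hs
    have hs0 : s ≠ 0 := ne_of_gt hs
    have hc0 : c ≠ 0 := ne_of_gt hc
    have : (c/s)^2 + c^2/(c/s)^2 = s^2 + c^2/s^2 := by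
      field_simp
      ring
    simp only [hg, this]
  constructor
  · have h1 := integral_image_eq_integral_abs_deriv_smul measurableSet_Ioi hderiv hinj g
    rw [himg] at h1
    rw [h1]
    refine setIntegral_congr_fun measurableSet_Ioi fun s hs => ?_
    have hs0 : (0:ℝ) < s := hs
    rw [smul_eq_mul, abs_neg, abs_of_pos (by positivity : (0:ℝ) < c/s^2), hcomp s hs]
  · have h2 := (integrableOn_image_iff_integrableOn_abs_deriv_smul
      measurableSet_Ioi hderiv hinj g).mp
    rw [himg] at h2
    have h3 := h2 (J_integrable' hc)
    refine h3.congr_fun (fun s hs => ?_) measurableSet_Ioi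
    have hs0 : (0:ℝ) < s := hs
    dsimp only
    rw [smul_eq_mul, abs_neg, abs_of_pos (by positivity : (0:ℝ) < c/s^2), hcomp s hs]

lemma J_eval' {c : ℝ} (hc : 0 < c) :
    (∫ s in Ioi (0:ℝ), exp (-((s^2 + c^2/s^2)/2))) = Real.sqrt (π/2) * exp (-c) := by
  have hderiv : ∀ s ∈ Ioi (0:ℝ),
      HasDerivWithinAt (fun y : ℝ => y - c / y) (1 + c / s^2) (Ioi 0) s := by
    intro s hs
    have hs0 : s ≠ 0 := ne_of_gt hs
    have h2 : HasDerivAt (fun y => c / y) (-(c / s^2)) s := by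
      simpa [div_eq_mul_inv, neg_mul, mul_comm] using (hasDerivAt_inv hs0).const_mul c
    have h3 := (hasDerivAt_id' s).fun_sub h2
    have h4 : HasDerivAt (fun y : ℝ => y - c / y) (1 + c / s^2) s := by
      simpa [sub_neg_eq_add] using h3
    exact h4.hasDerivWithinAt
  have hmono : StrictMonoOn (fun y : ℝ => y - c / y) (Ioi 0) := by
    intro x hx y hy hxy
    have hx0 : (0:ℝ) < x := hx
    have hy0 : (0:ℝ) < y := hy
    have h5 : c / y < c / x := div_lt_div_of_pos_left hc hx0 hxy
    dsimp only
    linarith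
  have himg : (fun y : ℝ => y - c / y) '' (Ioi 0) = univ := by
    ext y
    simp only [mem_univ, iff_true, mem_image, mem_Ioi]
    have h1 : |y| < Real.sqrt (y^2 + 4*c) := by
      rw [← Real.sqrt_sq_eq_abs]
      exact Real.sqrt_lt_sqrt (sq_nonneg y) (by linarith)
    have h1' := neg_lt_of_abs_lt h1
    have hsq : Real.sqrt (y^2 + 4*c) ^ 2 = y^2 + 4*c := Real.sq_sqrt (by positivity)
    refine ⟨(y + Real.sqrt (y^2 + 4*c))/2, by linarith, ?_⟩
    have hspos : (0:ℝ) < (y + Real.sqrt (y^2 + 4*c))/2 := by linarith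
    have hne : y + Real.sqrt (y^2 + 4*c) ≠ 0 := by
      intro h; rw [h] at hspos; norm_num at hspos
    field_simp
    nlinarith [hsq]
  have key := integral_image_eq_integral_abs_deriv_smul measurableSet_Ioi hderiv
    hmono.injOn (fun x => exp (-(x^2/2)))
  rw [himg, Measure.restrict_univ, gauss_half'] at key
  have step : ∀ s ∈ Ioi (0:ℝ),
      |1 + c/s^2| • exp (-((s - c/s)^2/2))
        = exp c * (exp (-((s^2 + c^2/s^2)/2)) + (c/s^2) * exp (-((s^2 + c^2/s^2)/2))) := by
    intro s hs
    have hs0 : s ≠ 0 := ne_of_gt hs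
    have hspos : (0:ℝ) < s := hs
    have habs : |1 + c/s^2| = 1 + c/s^2 := abs_of_pos (by positivity)
    have hsq : (s - c/s)^2 = s^2 + c^2/s^2 - 2*c := by
      field_simp
      ring
    rw [smul_eq_mul, habs, hsq]
    rw [show -((s^2 + c^2/s^2 - 2*c)/2) = c + -((s^2 + c^2/s^2)/2) from by ring, Real.exp_add]
    ring
  rw [setIntegral_congr_fun measurableSet_Ioi step] at key
  obtain ⟨hinv, hintg2⟩ := inv_trick' hc
  rw [integral_const_mul, integral_add (J_integrable' hc) hintg2, ← hinv] at key
  -- key : √(2π) = exp c * (J + J)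
  have h2π : Real.sqrt (2*π) = 2 * Real.sqrt (π/2) := by
    rw [show (2*π:ℝ) = 2^2 * (π/2) from by ring, Real.sqrt_mul (by positivity),
      Real.sqrt_sq (by norm_num : (0:ℝ) ≤ 2)]
  have hexp : (0:ℝ) < exp c := Real.exp_pos c
  have hJval : (∫ s in Ioi (0:ℝ), exp (-((s^2 + c^2/s^2)/2)))
      = Real.sqrt (2*π) / (2 * exp c) := by
    rw [eq_div_iff (by positivity), key]
    ring
  rw [hJval, h2π, Real.exp_neg]
  field_simp

/-- Classical Laplace-type integral identity related to `K_{1/2}`: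
for `β, γ > 0`, `∫₀^∞ t^{-3/2} exp(-(βt + γ/t)/2) dt = √(2π/γ) e^{-√(βγ)}`. -/
theorem integral_rpow_neg_three_half_exp (β γ : ℝ) (hβ : 0 < β) (hγ : 0 < γ) :
    ∫ t in Ioi (0 : ℝ), t ^ (-(3 : ℝ) / 2) * exp (-((β * t + γ / t) / 2))
      = sqrt (2 * π / γ) * exp (-sqrt (β * γ)) := by
  have hc : (0:ℝ) < Real.sqrt (β*γ) := Real.sqrt_pos.mpr (by positivity)
  have hc2 : Real.sqrt (β*γ) ^ 2 = β*γ := Real.sq_sqrt (by positivity)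
  have hsγ : (0:ℝ) < Real.sqrt γ := Real.sqrt_pos.mpr hγ
  have hderiv : ∀ s ∈ Ioi (0:ℝ),
      HasDerivWithinAt (fun y : ℝ => γ / y^2) (-(2*γ/s^3)) (Ioi 0) s := by
    intro s hs
    have hs0 : (0:ℝ) < s := hs
    have h := (hasDerivAt_const s γ).fun_div (hasDerivAt_pow 2 s) (pow_ne_zero 2 (ne_of_gt hs0))
    refine HasDerivAt.hasDerivWithinAt ?_
    convert h using 1
    · rfl
    push_cast
    field_simp
    ring
  have hinj : InjOn (fun y : ℝ => γ / y^2) (Ioi 0) := by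
    intro x hx y hy hxy
    have hx0 : (0:ℝ) < x := hx
    have hy0 : (0:ℝ) < y := hy
    have h' : γ * (x^2)⁻¹ = γ * (y^2)⁻¹ := by
      simpa [div_eq_mul_inv] using hxy
    have h2 := inv_injective (mul_left_cancel₀ (ne_of_gt hγ) h')
    rw [← Real.sqrt_sq hx0.le, ← Real.sqrt_sq hy0.le, h2]
  have himg : (fun y : ℝ => γ / y^2) '' (Ioi 0) = Ioi (0:ℝ) := by
    ext x
    simp only [mem_image, mem_Ioi]
    constructor
    · rintro ⟨y, hy, rfl⟩; positivity
    · intro hx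
      refine ⟨Real.sqrt (γ/x), Real.sqrt_pos.mpr (by positivity), ?_⟩
      rw [Real.sq_sqrt (le_of_lt (div_pos hγ hx))]
      field_simp
  have key := integral_image_eq_integral_abs_deriv_smul measurableSet_Ioi hderiv hinj
    (fun t : ℝ => t ^ (-(3:ℝ)/2) * exp (-((β*t + γ/t)/2)))
  rw [himg] at key
  rw [key]
  have step : ∀ s ∈ Ioi (0:ℝ),
      |-(2*γ/s^3)| • ((fun t : ℝ => t ^ (-(3:ℝ)/2) * exp (-((β*t + γ/t)/2))) (γ/s^2))
        = (2/Real.sqrt γ) * exp (-((s^2 + Real.sqrt (β*γ)^2/s^2)/2)) := by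
    intro s hs
    have hs0 : (0:ℝ) < s := hs
    have hx : (0:ℝ) < γ/s^2 := by positivity
    have habs : |-(2*γ/s^3)| = 2*γ/s^3 := by
      rw [abs_neg]; exact abs_of_pos (by positivity)
    have hsqrt : Real.sqrt (γ/s^2) = Real.sqrt γ / s := by
      rw [Real.sqrt_div hγ.le, Real.sqrt_sq hs0.le]
    have hrpow : (γ/s^2 : ℝ) ^ (-(3:ℝ)/2) = s^3/(γ * Real.sqrt γ) := by
      rw [show (-(3:ℝ)/2) = -(3/2 : ℝ) from by norm_num, Real.rpow_neg hx.le,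
        show (3/2 : ℝ) = 1 + 1/2 from by norm_num, Real.rpow_add hx, Real.rpow_one,
        ← Real.sqrt_eq_rpow, hsqrt]
      rw [show γ/s^2 * (Real.sqrt γ / s) = γ * Real.sqrt γ / s^3 from by ring]
      rw [inv_div]
    have hfrac : γ / (γ/s^2) = s^2 := by field_simp
    have hγsq : Real.sqrt γ * Real.sqrt γ = γ := Real.mul_self_sqrt hγ.le
    show |-(2*γ/s^3)| * ((γ/s^2) ^ (-(3:ℝ)/2) * exp (-((β*(γ/s^2) + γ/(γ/s^2))/2)))
      = (2/Real.sqrt γ) * exp (-((s^2 + Real.sqrt (β*γ)^2/s^2)/2))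
    rw [habs, hrpow, hfrac, hc2]
    have hexpeq : -((β*(γ/s^2) + s^2)/2) = -((s^2 + β*γ/s^2)/2) := by ring
    rw [hexpeq]
    field_simp
  rw [setIntegral_congr_fun measurableSet_Ioi step, integral_const_mul, J_eval' hc]
  have hconst : Real.sqrt (2*π/γ) = 2/Real.sqrt γ * Real.sqrt (π/2) := by
    rw [show (2*π/γ:ℝ) = 2^2 * (π/2) / γ from by ring, Real.sqrt_div (by positivity) γ,
      Real.sqrt_mul (by positivity), Real.sqrt_sq (by norm_num : (0:ℝ) ≤ 2)]
    ring
  rw [hconst]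
  ring
end

section
/- Let ν be a finite measure on ℝ with λ = ν(ℝ), let c₀ ∈ ℝ, θ ≥ 0 and α_θ = √(c₀² + 2(λ+θ)). Define the operator Λ_θ on bounded measurable functions h : ℝ₊ → ℝ by Λ_θ h(x) = (1/α_θ) ∫_ℝ ν(dy) ∫_{-∞}^{min(x-y, x)} e^{-c₀ a}(e^{-α_θ |a|} - e^{-(2x-a)α_θ}) h(x - a - y) da. Then Λ_θ is a non-negative linear operator on L^∞(ℝ₊) and its operator norm equals λ/(λ + θ). -/
open MeasureTheory Real Set Filter Topology

private lemma RW.intOn_Ioi {b : ℝ} (hb : 0 < b) (c : ℝ) :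
    IntegrableOn (fun a : ℝ => exp (-(b * a))) (Ioi c) := by
  simpa [neg_mul] using exp_neg_integrableOn_Ioi c hb

private lemma RW.int_Ioi {b : ℝ} (hb : 0 < b) :
    ∫ a in Ioi (0:ℝ), exp (-(b * a)) = 1 / b := by
  have h := integral_comp_mul_left_Ioi (fun x => exp (-x)) 0 hb
  simp only [mul_zero, integral_exp_neg_Ioi, neg_zero, exp_zero, smul_eq_mul, mul_one] at h
  rw [h, one_div]

private lemma RW.intOn_Iic {b : ℝ} (hb : 0 < b) :
    IntegrableOn (fun a : ℝ => exp (b * a)) (Iic (0:ℝ)) := by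
  have A : MeasurableEmbedding (Neg.neg : ℝ → ℝ) :=
    (Homeomorph.neg ℝ).isClosedEmbedding.measurableEmbedding
  have key := A.integrableOn_map_iff (f := fun a : ℝ => exp (b * a)) (s := Iic 0) (μ := volume)
  rw [Measure.map_neg_eq_self] at key
  rw [key]
  simp only [Function.comp_def, mul_neg, neg_preimage, neg_Iic, neg_zero, ← neg_mul]
  rw [integrableOn_Ici_iff_integrableOn_Ioi]
  simpa [neg_mul] using RW.intOn_Ioi hb 0

private lemma RW.int_Iic {b : ℝ} (hb : 0 < b) :
    ∫ a in Iic (0:ℝ), exp (b * a) = 1 / b := by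
  have h := integral_comp_neg_Iic (0:ℝ) (fun x => exp (-(b * x)))
  simp only [mul_neg, neg_neg, neg_zero] at h
  rw [h, RW.int_Ioi hb]

private lemma RW.alpha_facts {c₀ L α : ℝ} (hL : 0 < L) (hα : α = Real.sqrt (c₀ ^ 2 + 2 * L)) :
    0 < α ∧ α ^ 2 = c₀ ^ 2 + 2 * L ∧ |c₀| < α := by
  have h0 : (0:ℝ) < c₀ ^ 2 + 2 * L := by positivity
  have hsq : α ^ 2 = c₀ ^ 2 + 2 * L := by rw [hα, sq_sqrt h0.le]
  have hαpos : 0 < α := by rw [hα]; exact Real.sqrt_pos.mpr h0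
  refine ⟨hαpos, hsq, ?_⟩
  nlinarith [abs_nonneg c₀, sq_abs c₀]

private lemma RW.phi_integrable {c₀ L α : ℝ} (hL : 0 < L)
    (hα : α = Real.sqrt (c₀ ^ 2 + 2 * L)) :
    Integrable (fun a : ℝ => exp (-c₀ * a) * exp (-(α * |a|))) := by
  obtain ⟨hαpos, hsq, habs⟩ := RW.alpha_facts hL hα
  have hml : 0 < α - c₀ := by cases abs_lt.mp habs; linarith
  have hpl : 0 < α + c₀ := by cases abs_lt.mp habs; linarith
  have hIic : IntegrableOn (fun a : ℝ => exp (-c₀ * a) * exp (-(α * |a|))) (Iic 0) := by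
    refine (RW.intOn_Iic hml).congr_fun (fun a ha => ?_) measurableSet_Iic
    rw [abs_of_nonpos (mem_Iic.mp ha), ← exp_add]
    ring_nf
  have hIoi : IntegrableOn (fun a : ℝ => exp (-c₀ * a) * exp (-(α * |a|))) (Ioi 0) := by
    refine (RW.intOn_Ioi hpl 0).congr_fun (fun a ha => ?_) measurableSet_Ioi
    rw [abs_of_pos (mem_Ioi.mp ha), ← exp_add]
    ring_nf
  have := hIic.union hIoi
  rwa [Iic_union_Ioi, integrableOn_univ] at this

private lemma RW.phi_integral {c₀ L α : ℝ} (hL : 0 < L)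
    (hα : α = Real.sqrt (c₀ ^ 2 + 2 * L)) :
    ∫ a : ℝ, exp (-c₀ * a) * exp (-(α * |a|)) = α / L := by
  obtain ⟨hαpos, hsq, habs⟩ := RW.alpha_facts hL hα
  have hml : 0 < α - c₀ := by cases abs_lt.mp habs; linarith
  have hpl : 0 < α + c₀ := by cases abs_lt.mp habs; linarith
  have hIic : IntegrableOn (fun a : ℝ => exp (-c₀ * a) * exp (-(α * |a|))) (Iic 0) := by
    refine (RW.intOn_Iic hml).congr_fun (fun a ha => ?_) measurableSet_Iic
    rw [abs_of_nonpos (mem_Iic.mp ha), ← exp_add]; ring_nf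
  have hIoi : IntegrableOn (fun a : ℝ => exp (-c₀ * a) * exp (-(α * |a|))) (Ioi 0) := by
    refine (RW.intOn_Ioi hpl 0).congr_fun (fun a ha => ?_) measurableSet_Ioi
    rw [abs_of_pos (mem_Ioi.mp ha), ← exp_add]; ring_nf
  have hsplit := setIntegral_union (Iic_disjoint_Ioi le_rfl) measurableSet_Ioi hIic hIoi
  rw [Iic_union_Ioi] at hsplit
  rw [← setIntegral_univ, hsplit]
  have e1 : ∫ a in Iic (0:ℝ), exp (-c₀ * a) * exp (-(α * |a|)) = 1 / (α - c₀) := by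
    rw [← RW.int_Iic hml]
    refine setIntegral_congr_fun measurableSet_Iic (fun a ha => ?_)
    rw [abs_of_nonpos (mem_Iic.mp ha), ← exp_add]; ring_nf
  have e2 : ∫ a in Ioi (0:ℝ), exp (-c₀ * a) * exp (-(α * |a|)) = 1 / (α + c₀) := by
    rw [← RW.int_Ioi hpl]
    refine setIntegral_congr_fun measurableSet_Ioi (fun a ha => ?_)
    rw [abs_of_pos (mem_Ioi.mp ha), ← exp_add]; ring_nf
  rw [e1, e2]
  field_simp
  ring_nf
  nlinarith [hsq]

private lemma RW.kernel_bounds {α x a : ℝ} (hα0 : 0 ≤ α) (hx : 0 ≤ x) (ha : a ≤ x) (c₀ : ℝ) :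
    0 ≤ exp (-c₀ * a) * (exp (-(α * |a|)) - exp (-((2 * x - a) * α))) ∧
      exp (-c₀ * a) * (exp (-(α * |a|)) - exp (-((2 * x - a) * α))) ≤
        exp (-c₀ * a) * exp (-(α * |a|)) := by
  have habs : |a| ≤ 2 * x - a := by
    rcases abs_cases a with ⟨he, _⟩ | ⟨he, _⟩ <;> rw [he] <;> linarith
  have hle : exp (-((2 * x - a) * α)) ≤ exp (-(α * |a|)) := by
    apply exp_le_exp.mpr
    have := mul_le_mul_of_nonneg_right habs hα0
    nlinarith
  constructor
  · apply mul_nonneg (exp_pos _).le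
    linarith
  · apply mul_le_mul_of_nonneg_left _ (exp_pos _).le
    nlinarith [exp_pos (-((2 * x - a) * α))]

private lemma RW.inner_bound {c₀ L α : ℝ} (hL : 0 < L)
    (hα : α = Real.sqrt (c₀ ^ 2 + 2 * L)) {h : ℝ → ℝ} {C : ℝ} (hh : ∀ z, |h z| ≤ C)
    {x : ℝ} (hx : 0 ≤ x) (y : ℝ) :
    |∫ a in Iio (min (x - y) x),
        exp (-c₀ * a) * (exp (-(α * |a|)) - exp (-((2 * x - a) * α))) * h (x - a - y)| ≤
      C * (α / L) := by
  obtain ⟨hαpos, hsq, habs⟩ := RW.alpha_facts hL hα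
  have hC : 0 ≤ C := le_trans (abs_nonneg _) (hh 0)
  have hphi := RW.phi_integrable hL hα
  have hphiC : Integrable (fun a : ℝ => exp (-c₀ * a) * exp (-(α * |a|)) * C) :=
    hphi.mul_const C
  calc |∫ a in Iio (min (x - y) x),
        exp (-c₀ * a) * (exp (-(α * |a|)) - exp (-((2 * x - a) * α))) * h (x - a - y)|
      ≤ ∫ a in Iio (min (x - y) x),
        |exp (-c₀ * a) * (exp (-(α * |a|)) - exp (-((2 * x - a) * α))) * h (x - a - y)| := by
        simpa only [Real.norm_eq_abs] using norm_integral_le_integral_norm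
          (μ := volume.restrict (Iio (min (x - y) x)))
          (fun a => exp (-c₀ * a) * (exp (-(α * |a|)) - exp (-((2 * x - a) * α))) * h (x - a - y))
    _ ≤ ∫ a in Iio (min (x - y) x), exp (-c₀ * a) * exp (-(α * |a|)) * C := by
        refine integral_mono_of_nonneg (Eventually.of_forall fun a => abs_nonneg _)
          hphiC.integrableOn ?_
        filter_upwards [ae_restrict_mem measurableSet_Iio] with a ha
        have ha' : a ≤ x := le_trans (le_of_lt ha) (min_le_right _ _)
        obtain ⟨hk0, hkle⟩ := RW.kernel_bounds hαpos.le hx ha' c₀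
        rw [abs_mul, abs_of_nonneg hk0]
        exact mul_le_mul hkle (hh _) (abs_nonneg _)
          (le_trans hk0 hkle)
    _ ≤ ∫ a : ℝ, exp (-c₀ * a) * exp (-(α * |a|)) * C := by
        refine setIntegral_le_integral hphiC (Eventually.of_forall fun a => ?_)
        positivity
    _ = C * (α / L) := by
        rw [integral_mul_const, RW.phi_integral hL hα, mul_comm]

open MeasureTheory Real Set Filter

private lemma RW.outer_bound (ν : Measure ℝ) [IsFiniteMeasure ν] {c₀ L α lam : ℝ}
    (hL : 0 < L) (hα : α = Real.sqrt (c₀ ^ 2 + 2 * L)) (hlam : lam = (ν univ).toReal)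
    {h : ℝ → ℝ} {C : ℝ} (hh : ∀ z, |h z| ≤ C) {x : ℝ} (hx : 0 ≤ x) :
    |(1 / α) * ∫ y, (∫ a in Iio (min (x - y) x),
        exp (-c₀ * a) * (exp (-(α * |a|)) - exp (-((2 * x - a) * α))) * h (x - a - y)) ∂ν| ≤
      lam / L * C := by
  obtain ⟨hαpos, hsq, habs⟩ := RW.alpha_facts hL hα
  have hC : 0 ≤ C := le_trans (abs_nonneg _) (hh 0)
  have hlam0 : 0 ≤ lam := hlam ▸ ENNReal.toReal_nonneg
  rw [abs_mul, abs_of_nonneg (by positivity : (0:ℝ) ≤ 1 / α)]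
  have hb := norm_integral_le_of_norm_le_const (μ := ν)
    (f := fun y => ∫ a in Iio (min (x - y) x),
      exp (-c₀ * a) * (exp (-(α * |a|)) - exp (-((2 * x - a) * α))) * h (x - a - y))
    (C := C * (α / L))
    (Eventually.of_forall fun y => by
      simpa only [Real.norm_eq_abs] using RW.inner_bound hL hα hh hx y)
  rw [Real.norm_eq_abs] at hb
  calc (1 / α) * |∫ y, (∫ a in Iio (min (x - y) x),
        exp (-c₀ * a) * (exp (-(α * |a|)) - exp (-((2 * x - a) * α))) * h (x - a - y)) ∂ν|
      ≤ (1 / α) * (C * (α / L) * lam) := by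
        refine mul_le_mul_of_nonneg_left ?_ (by positivity)
        rw [hlam]; exact hb
    _ = lam / L * C := by field_simp

/-- The renewal operator `Λ_θ` associated with a finite jump measure `ν` (mass `λ`),
drift `-c₀` and killing rate `θ ≥ 0` is a non-negative linear operator on `L^∞(ℝ₊)`
with operator norm `λ/(λ+θ)`: it maps non-negative functions to non-negative functions,
satisfies `|Λ_θ h(x)| ≤ (λ/(λ+θ)) ‖h‖_∞`, and the bound is attained (as a supremum)
at the constant function `1`. -/
theorem renewal_operator_norm (ν : Measure ℝ) [IsFiniteMeasure ν]
    (c₀ θ lam : ℝ) (hθ : 0 ≤ θ) (hlam : lam = (ν univ).toReal) (hpos : 0 < lam + θ) :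
    (∀ h : ℝ → ℝ, Measurable h → (∀ z, 0 ≤ h z) → ∀ x : ℝ, 0 ≤ x →
      0 ≤ (1 / Real.sqrt (c₀ ^ 2 + 2 * (lam + θ))) *
        ∫ y, (∫ a in Iio (min (x - y) x),
          exp (-c₀ * a) * (exp (-(Real.sqrt (c₀ ^ 2 + 2 * (lam + θ)) * |a|)) -
            exp (-((2 * x - a) * Real.sqrt (c₀ ^ 2 + 2 * (lam + θ))))) * h (x - a - y)) ∂ν) ∧
    (∀ (h : ℝ → ℝ), Measurable h → ∀ C : ℝ, (∀ z, |h z| ≤ C) → ∀ x : ℝ, 0 ≤ x →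
      |(1 / Real.sqrt (c₀ ^ 2 + 2 * (lam + θ))) *
        ∫ y, (∫ a in Iio (min (x - y) x),
          exp (-c₀ * a) * (exp (-(Real.sqrt (c₀ ^ 2 + 2 * (lam + θ)) * |a|)) -
            exp (-((2 * x - a) * Real.sqrt (c₀ ^ 2 + 2 * (lam + θ))))) * h (x - a - y)) ∂ν|
        ≤ (lam / (lam + θ)) * C) ∧
    (⨆ x : Ici (0 : ℝ),
      (1 / Real.sqrt (c₀ ^ 2 + 2 * (lam + θ))) *
        ∫ y, (∫ a in Iio (min ((x : ℝ) - y) (x : ℝ)),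
          exp (-c₀ * a) * (exp (-(Real.sqrt (c₀ ^ 2 + 2 * (lam + θ)) * |a|)) -
            exp (-((2 * (x : ℝ) - a) * Real.sqrt (c₀ ^ 2 + 2 * (lam + θ)))))) ∂ν)
      = lam / (lam + θ) := by
  set α := Real.sqrt (c₀ ^ 2 + 2 * (lam + θ)) with hαdef
  obtain ⟨hαpos, hsq, habs⟩ := RW.alpha_facts hpos hαdef
  have hlam0 : 0 ≤ lam := hlam ▸ ENNReal.toReal_nonneg
  have hphi := RW.phi_integrable hpos hαdef
  have hmeasK : ∀ x : ℝ, Measurable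
      (fun a : ℝ => exp (-c₀ * a) * (exp (-(α * |a|)) - exp (-((2 * x - a) * α)))) := by
    intro x; fun_prop
  refine ⟨?_, ?_, ?_⟩
  · -- non-negativity
    intro h hmeas hnn x hx
    refine mul_nonneg (by positivity) (integral_nonneg fun y => ?_)
    refine setIntegral_nonneg measurableSet_Iio fun a ha => ?_
    have ha' : a ≤ x := le_trans (le_of_lt ha) (min_le_right _ _)
    exact mul_nonneg (RW.kernel_bounds hαpos.le hx ha' c₀).1 (hnn _)
  · -- norm bound
    intro h hmeas C hh x hx
    exact RW.outer_bound ν hpos hαdef hlam hh hx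
  · -- supremum equals lam/(lam+θ)
    have hub : ∀ x : ℝ, 0 ≤ x →
        (1 / α) * (∫ y, (∫ a in Iio (min (x - y) x),
          exp (-c₀ * a) * (exp (-(α * |a|)) - exp (-((2 * x - a) * α)))) ∂ν)
          ≤ lam / (lam + θ) := by
      intro x hx
      have hb := RW.outer_bound ν (h := fun _ => (1:ℝ)) (C := 1) hpos hαdef hlam
        (fun z => by norm_num) hx
      simp only [mul_one] at hb
      exact le_trans (le_abs_self _) hb
    -- the sequence of values at x = n
    have hinnerub : ∀ (x : ℝ), 0 ≤ x → ∀ y : ℝ,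
        |∫ a in Iio (min (x - y) x),
          exp (-c₀ * a) * (exp (-(α * |a|)) - exp (-((2 * x - a) * α)))| ≤
          α / (lam + θ) := by
      intro x hx y
      have := RW.inner_bound (h := fun _ => (1:ℝ)) (C := 1) hpos hαdef
        (fun z => by norm_num) hx y
      simpa only [mul_one, one_mul] using this
    have hinnernn : ∀ (x : ℝ), 0 ≤ x → ∀ y : ℝ,
        0 ≤ ∫ a in Iio (min (x - y) x),
          exp (-c₀ * a) * (exp (-(α * |a|)) - exp (-((2 * x - a) * α))) := by
      intro x hx y
      refine setIntegral_nonneg measurableSet_Iio fun a ha => ?_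
      exact (RW.kernel_bounds hαpos.le hx (le_trans (le_of_lt ha) (min_le_right _ _)) c₀).1
    have hmeasf : ∀ n : ℕ, Measurable (fun y : ℝ => ∫ a in Iio (min ((n:ℝ) - y) n),
        exp (-c₀ * a) * (exp (-(α * |a|)) - exp (-((2 * (n:ℝ) - a) * α)))) := by
      intro n
      have hanti : Antitone (fun y : ℝ => ∫ a in Iio (min ((n:ℝ) - y) n),
          exp (-c₀ * a) * (exp (-(α * |a|)) - exp (-((2 * (n:ℝ) - a) * α)))) := by
        intro y1 y2 hy
        have hIntOn : IntegrableOn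
            (fun a : ℝ => exp (-c₀ * a) * (exp (-(α * |a|)) - exp (-((2 * (n:ℝ) - a) * α))))
            (Iio (min ((n:ℝ) - y1) n)) := by
          refine Integrable.mono' hphi.integrableOn
            ((hmeasK n).aestronglyMeasurable.restrict) ?_
          filter_upwards [ae_restrict_mem measurableSet_Iio] with a ha
          have ha' : a ≤ (n:ℝ) := le_trans (le_of_lt ha) (min_le_right _ _)
          obtain ⟨h0, hle⟩ := RW.kernel_bounds hαpos.le (Nat.cast_nonneg n) ha' c₀
          rw [Real.norm_eq_abs, abs_of_nonneg h0]; exact hle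
        refine setIntegral_mono_set hIntOn ?_ ?_
        · filter_upwards [ae_restrict_mem measurableSet_Iio] with a ha
          exact (RW.kernel_bounds hαpos.le (Nat.cast_nonneg n)
            (le_trans (le_of_lt ha) (min_le_right _ _)) c₀).1
        · refine HasSubset.Subset.eventuallyLE (Iio_subset_Iio ?_)
          exact min_le_min (by linarith) le_rfl
      exact hanti.measurable
    have hlim : ∀ y : ℝ, Tendsto (fun n : ℕ => ∫ a in Iio (min ((n:ℝ) - y) n),
        exp (-c₀ * a) * (exp (-(α * |a|)) - exp (-((2 * (n:ℝ) - a) * α)))) atTop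
        (𝓝 (α / (lam + θ))) := by
      intro y
      have key : Tendsto (fun n : ℕ => ∫ a : ℝ, (Iio (min ((n:ℝ) - y) n)).indicator
          (fun a : ℝ => exp (-c₀ * a) * (exp (-(α * |a|)) - exp (-((2 * (n:ℝ) - a) * α)))) a)
          atTop (𝓝 (∫ a : ℝ, exp (-c₀ * a) * exp (-(α * |a|)))) := by
        refine tendsto_integral_of_dominated_convergence
          (fun a : ℝ => exp (-c₀ * a) * exp (-(α * |a|)))
          (fun n => ((hmeasK _).indicator measurableSet_Iio).aestronglyMeasurable)
          hphi ?_ ?_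
        · intro n
          refine Eventually.of_forall fun a => ?_
          by_cases hmem : a ∈ Iio (min ((n:ℝ) - y) n)
          · rw [indicator_of_mem hmem]
            have ha' : a ≤ (n:ℝ) := le_trans (le_of_lt hmem) (min_le_right _ _)
            obtain ⟨h0, hle⟩ := RW.kernel_bounds hαpos.le (Nat.cast_nonneg n) ha' c₀
            rw [Real.norm_eq_abs, abs_of_nonneg h0]; exact hle
          · rw [indicator_of_notMem hmem]; simp; positivity
        · refine Eventually.of_forall fun a => ?_
          obtain ⟨N, hN⟩ := exists_nat_gt (max (a + y) a)
          have hev : ∀ᶠ n : ℕ in atTop, (Iio (min ((n:ℝ) - y) n)).indicator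
              (fun a : ℝ => exp (-c₀ * a) * (exp (-(α * |a|)) - exp (-((2 * (n:ℝ) - a) * α)))) a
              = exp (-c₀ * a) * (exp (-(α * |a|)) - exp (-((2 * (n:ℝ) - a) * α))) := by
            filter_upwards [eventually_ge_atTop N] with n hn
            have hNn : (N:ℝ) ≤ (n:ℝ) := Nat.cast_le.mpr hn
            have h1 : a + y < (n:ℝ) := lt_of_le_of_lt (le_max_left _ _) (lt_of_lt_of_le hN hNn)
            have h2 : a < (n:ℝ) := lt_of_le_of_lt (le_max_right _ _) (lt_of_lt_of_le hN hNn)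
            have hmem : a ∈ Iio (min ((n:ℝ) - y) (n:ℝ)) := lt_min (by linarith) h2
            exact indicator_of_mem hmem _
          have ht1 : Tendsto (fun n : ℕ => (2 * (n:ℝ) + -a) * α) atTop atTop := by
            refine Tendsto.atTop_mul_const hαpos ?_
            exact tendsto_atTop_add_const_right atTop (-a)
              ((tendsto_natCast_atTop_atTop (R := ℝ)).const_mul_atTop (by norm_num))
          have ht2 : Tendsto (fun n : ℕ => exp (-((2 * (n:ℝ) - a) * α))) atTop (𝓝 0) := by
            have := tendsto_exp_neg_atTop_nhds_zero.comp ht1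
            simpa only [Function.comp_def, sub_eq_add_neg] using this
          have ht3 : Tendsto (fun n : ℕ =>
              exp (-c₀ * a) * (exp (-(α * |a|)) - exp (-((2 * (n:ℝ) - a) * α)))) atTop
              (𝓝 (exp (-c₀ * a) * exp (-(α * |a|)))) := by
            have hc : Tendsto (fun _ : ℕ => exp (-(α * |a|))) atTop (𝓝 (exp (-(α * |a|)))) :=
              tendsto_const_nhds
            have := (hc.sub ht2).const_mul (exp (-c₀ * a))
            simpa only [sub_zero] using this
          exact ht3.congr' (hev.mono fun n hn => hn.symm)
      have heq : ∀ n : ℕ, (∫ a : ℝ, (Iio (min ((n:ℝ) - y) n)).indicator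
          (fun a : ℝ => exp (-c₀ * a) * (exp (-(α * |a|)) - exp (-((2 * (n:ℝ) - a) * α)))) a)
          = ∫ a in Iio (min ((n:ℝ) - y) n),
            exp (-c₀ * a) * (exp (-(α * |a|)) - exp (-((2 * (n:ℝ) - a) * α))) := fun n =>
        integral_indicator measurableSet_Iio
      rw [RW.phi_integral hpos hαdef] at key
      exact (key.congr heq)
    have houter : Tendsto (fun n : ℕ => ∫ y, (∫ a in Iio (min ((n:ℝ) - y) n),
        exp (-c₀ * a) * (exp (-(α * |a|)) - exp (-((2 * (n:ℝ) - a) * α)))) ∂ν) atTop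
        (𝓝 (lam * (α / (lam + θ)))) := by
      have key := tendsto_integral_of_dominated_convergence (μ := ν)
        (F := fun n y => ∫ a in Iio (min ((n:ℝ) - y) n),
          exp (-c₀ * a) * (exp (-(α * |a|)) - exp (-((2 * (n:ℝ) - a) * α))))
        (f := fun _ => α / (lam + θ)) (bound := fun _ => α / (lam + θ))
        (fun n => (hmeasf n).aestronglyMeasurable) (integrable_const _)
        (fun n => Eventually.of_forall fun y => by
          rw [Real.norm_eq_abs]; exact hinnerub _ (Nat.cast_nonneg n) y)
        (Eventually.of_forall fun y => hlim y)
      rw [integral_const, smul_eq_mul, measureReal_def, ← hlam] at key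
      exact key
    have hS : Tendsto (fun n : ℕ => (1 / α) * ∫ y, (∫ a in Iio (min ((n:ℝ) - y) n),
        exp (-c₀ * a) * (exp (-(α * |a|)) - exp (-((2 * (n:ℝ) - a) * α)))) ∂ν) atTop
        (𝓝 (lam / (lam + θ))) := by
      have := houter.const_mul (1 / α)
      have heq : (1 / α) * (lam * (α / (lam + θ))) = lam / (lam + θ) := by
        field_simp
      rwa [heq] at this
    haveI : Nonempty (Ici (0:ℝ)) := ⟨⟨0, mem_Ici.mpr (le_refl 0)⟩⟩
    have hbdd : BddAbove (range fun x : Ici (0:ℝ) =>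
        (1 / α) * ∫ y, (∫ a in Iio (min ((x:ℝ) - y) (x:ℝ)),
          exp (-c₀ * a) * (exp (-(α * |a|)) - exp (-((2 * (x:ℝ) - a) * α)))) ∂ν) := by
      refine ⟨lam / (lam + θ), ?_⟩
      rintro _ ⟨x, rfl⟩
      exact hub _ x.2
    refine le_antisymm (ciSup_le fun x => hub _ x.2) ?_
    refine le_of_tendsto' hS fun n => ?_
    exact le_ciSup hbdd (⟨(n:ℝ), mem_Ici.mpr (Nat.cast_nonneg n)⟩ : Ici (0:ℝ))
end

section
/- Under the hypotheses of the previous statement, if moreover θ > 0, or θ = 0 and E(X₁) < 0, then there exists γ ∈ (0, r_ν) with φ(-γ) < θ, and for any such γ one has 0 < c_{θ,γ} < 1, so Λ_θ is a strict contraction on 𝓑_γ. -/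
open MeasureTheory Real Set

open Filter


lemma key_ineq (t : ℝ) : |Real.exp t - 1| ≤ |t| * (1 + Real.exp t) := by
  have h2 : Real.exp (-t) * Real.exp t = 1 := by rw [← Real.exp_add]; simp
  rcases le_or_gt 0 t with h | h
  · rw [abs_of_nonneg (by linarith [Real.one_le_exp h] : (0:ℝ) ≤ Real.exp t - 1),
      abs_of_nonneg h]
    nlinarith [Real.add_one_le_exp (-t), Real.exp_pos t, Real.exp_pos (-t)]
  · rw [abs_of_nonpos (by nlinarith [Real.exp_lt_one_iff.mpr h] : Real.exp t - 1 ≤ 0),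
      abs_of_neg h]
    nlinarith [Real.add_one_le_exp t, Real.exp_pos t]

lemma bound_lem {s γ : ℝ} (y : ℝ) (hs : 0 < s) (h0 : 0 < γ) (h2 : γ ≤ s/2) :
    |(Real.exp (γ*y) - 1)/γ| ≤ 3*|y| + (2/s)*Real.exp (s*y) := by
  have hEE : Real.exp ((s/2)*y) * Real.exp ((s/2)*y) = Real.exp (s*y) := by
    rw [← Real.exp_add]; ring_nf
  have b1 : Real.exp (γ*y) ≤ 1 + Real.exp ((s/2)*y) := by
    rcases le_or_gt 0 y with hy | hy
    · have : Real.exp (γ*y) ≤ Real.exp ((s/2)*y) := Real.exp_le_exp.mpr (by nlinarith)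
      linarith [Real.exp_pos ((s/2)*y)]
    · have : Real.exp (γ*y) ≤ 1 := Real.exp_le_one_iff.mpr (by nlinarith)
      linarith [Real.exp_pos ((s/2)*y)]
  have b2 : |y| * Real.exp ((s/2)*y) ≤ |y| + (2/s) * Real.exp (s*y) := by
    rcases le_or_gt 0 y with hy | hy
    · rw [abs_of_nonneg hy]
      have hle : y ≤ (2/s) * Real.exp ((s/2)*y) := by
        have h := Real.add_one_le_exp ((s/2)*y)
        rw [div_mul_eq_mul_div, le_div_iff₀ hs]
        nlinarith
      nlinarith [Real.exp_pos ((s/2)*y), hle, Real.exp_pos (s*y)]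
    · have h1 : Real.exp ((s/2)*y) ≤ 1 := Real.exp_le_one_iff.mpr (by nlinarith)
      have h2 := mul_le_mul_of_nonneg_left h1 (abs_nonneg y)
      have h3 : (0:ℝ) ≤ (2/s) * Real.exp (s*y) := by positivity
      nlinarith
  have h1 := key_ineq (γ*y)
  rw [abs_mul, abs_of_pos h0] at h1
  rw [abs_div, abs_of_pos h0, div_le_iff₀ h0]
  calc |Real.exp (γ*y) - 1| ≤ γ * |y| * (1 + Real.exp (γ*y)) := h1
    _ ≤ γ * |y| * (2 + Real.exp ((s/2)*y)) := by
        apply mul_le_mul_of_nonneg_left (by linarith) (by positivity)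
    _ = γ * (2*|y| + |y| * Real.exp ((s/2)*y)) := by ring
    _ ≤ γ * (2*|y| + (|y| + (2/s) * Real.exp (s*y))) := by
        apply mul_le_mul_of_nonneg_left (by linarith) h0.le
    _ = (3*|y| + (2/s)*Real.exp (s*y)) * γ := by ring


section helpers
variable {ν : Measure ℝ} [IsFiniteMeasure ν]

lemma exp_int {s γ : ℝ} (hrν : Integrable (fun y => Real.exp (s * y)) ν)
    (h0 : 0 ≤ γ) (h1 : γ ≤ s) : Integrable (fun y => Real.exp (γ * y)) ν := by
  have hi : Integrable (fun y => 1 + Real.exp (s * y)) ν := (integrable_const 1).add hrν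
  refine hi.mono ?_ ?_
  · exact (Real.continuous_exp.comp (continuous_const.mul continuous_id)).aestronglyMeasurable
  · filter_upwards with y
    rw [Real.norm_eq_abs, Real.norm_eq_abs, abs_of_pos (Real.exp_pos _),
      abs_of_pos (by positivity : (0:ℝ) < 1 + Real.exp (s*y))]
    rcases le_or_gt 0 y with hy | hy
    · have : Real.exp (γ*y) ≤ Real.exp (s*y) := Real.exp_le_exp.mpr (by nlinarith)
      linarith
    · have : Real.exp (γ*y) ≤ 1 := Real.exp_le_one_iff.mpr (by nlinarith)
      linarith [Real.exp_pos (s*y)]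

lemma ind_int : Integrable (fun y => if |y| < 1 then y else 0) ν := by
  have hm : Measurable fun y : ℝ => if |y| < 1 then y else 0 :=
    Measurable.ite (measurableSet_lt (by fun_prop) measurable_const) measurable_id
      measurable_const
  refine (integrable_const (1:ℝ)).mono hm.aestronglyMeasurable ?_
  filter_upwards with y
  rw [Real.norm_eq_abs, Real.norm_eq_abs]
  split
  · next h => simp [le_of_lt h]
  · simp
end helpers

/-- If `θ > 0`, or `θ = 0` and `E(X₁) < 0`, then there exists `γ ∈ (0, r_ν)` with
`φ(-γ) < θ` (here `γ < r_ν` is encoded by `γ < s` where `e^{sy}` is `ν`-integrable),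
and for any such `γ` the contraction constant
`c_{θ,γ} = ν̂(-γ)/(ν̂(-γ) - φ(-γ) + θ)` satisfies `0 < c_{θ,γ} < 1`. -/
theorem exists_contraction_constant (ν : Measure ℝ) [IsFiniteMeasure ν] (hν : ν ≠ 0)
    (c c₀ θ s : ℝ)
    (hc₀ : c₀ = c + ∫ y, (if |y| < 1 then y else 0) ∂ν)
    (hs : 0 < s) (hrν : Integrable (fun y => exp (s * y)) ν)
    (hEXint : Integrable (fun y => y) ν)
    (hθ : 0 < θ ∨ (θ = 0 ∧ -c₀ + ∫ y, y ∂ν < 0)) :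
    (∃ γ : ℝ, 0 < γ ∧ γ < s ∧
      (-γ) ^ 2 / 2 + c * (-γ) +
          (∫ y, (exp (γ * y) - 1 + (-γ) * y * (if |y| < 1 then 1 else 0)) ∂ν) < θ) ∧
    ∀ γ : ℝ, 0 < γ → γ < s →
      (-γ) ^ 2 / 2 + c * (-γ) +
          (∫ y, (exp (γ * y) - 1 + (-γ) * y * (if |y| < 1 then 1 else 0)) ∂ν) < θ →
      0 < (∫ y, exp (γ * y) ∂ν) /
            ((∫ y, exp (γ * y) ∂ν) -
              ((-γ) ^ 2 / 2 + c * (-γ) +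
                ∫ y, (exp (γ * y) - 1 + (-γ) * y * (if |y| < 1 then 1 else 0)) ∂ν) + θ) ∧
      (∫ y, exp (γ * y) ∂ν) /
            ((∫ y, exp (γ * y) ∂ν) -
              ((-γ) ^ 2 / 2 + c * (-γ) +
                ∫ y, (exp (γ * y) - 1 + (-γ) * y * (if |y| < 1 then 1 else 0)) ∂ν) + θ) < 1 := by
  have hexpInt : ∀ γ : ℝ, 0 ≤ γ → γ ≤ s → Integrable (fun y => Real.exp (γ * y)) ν :=
    fun γ h0 h1 => exp_int hrν h0 h1
  have hindInt : Integrable (fun y => if |y| < 1 then y else 0) ν := ind_int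
  -- splitting the integral
  have hsplit : ∀ γ : ℝ, 0 ≤ γ → γ ≤ s →
      (∫ y, (Real.exp (γ * y) - 1 + (-γ) * y * (if |y| < 1 then 1 else 0)) ∂ν)
        = (∫ y, (Real.exp (γ*y) - 1) ∂ν)
            + (-γ) * ∫ y, (if |y| < 1 then y else 0) ∂ν := by
    intro γ h0 h1
    have hB : Integrable (fun y => Real.exp (γ*y) - 1) ν :=
      (hexpInt γ h0 h1).sub (integrable_const 1)
    have hD : Integrable (fun y => (-γ) * (if |y| < 1 then y else 0)) ν :=
      hindInt.const_mul _
    have heq : (fun y => Real.exp (γ * y) - 1 + (-γ) * y * (if |y| < 1 then 1 else 0))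
        = fun y => (Real.exp (γ*y) - 1) + (-γ) * (if |y| < 1 then y else 0) := by
      funext y; split <;> ring
    rw [heq, integral_add hB hD, integral_const_mul]
  -- the auxiliary function G and its limit
  set I : ℝ := ∫ y, (if |y| < 1 then y else 0) ∂ν with hI
  set G : ℝ → ℝ := fun γ => γ/2 - c + (∫ y, (Real.exp (γ*y) - 1)/γ ∂ν) - I with hG
  have hFtend : Tendsto (fun γ : ℝ => ∫ y, (Real.exp (γ*y) - 1)/γ ∂ν)
      (nhdsWithin 0 (Ioi 0)) (nhds (∫ y, y ∂ν)) := by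
    apply tendsto_integral_filter_of_dominated_convergence
      (fun y => 3*|y| + (2/s)*Real.exp (s*y))
    · filter_upwards with γ
      exact (((Real.continuous_exp.comp (continuous_const.mul continuous_id)).sub
        continuous_const).div_const γ).aestronglyMeasurable
    · filter_upwards [Ioc_mem_nhdsGT_of_mem ⟨le_refl (0:ℝ), half_pos hs⟩] with γ hγ
      filter_upwards with y
      rw [Real.norm_eq_abs]
      exact bound_lem y hs hγ.1 hγ.2
    · exact (hEXint.norm.const_mul 3).add (hrν.const_mul (2/s))
    · filter_upwards with y
      have hd : HasDerivAt (fun t : ℝ => Real.exp (t*y)) y 0 := by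
        have h := (Real.hasDerivAt_exp ((0:ℝ)*y)).comp 0 ((hasDerivAt_id (0:ℝ)).mul_const y)
        simpa [Function.comp_def] using h
      have hsl := hasDerivAt_iff_tendsto_slope.mp hd
      have hmono : nhdsWithin (0:ℝ) (Ioi 0) ≤ nhdsWithin 0 {(0:ℝ)}ᶜ :=
        nhdsWithin_mono 0 (fun x hx => ne_of_gt hx)
      refine (hsl.mono_left hmono).congr (fun γ => ?_)
      simp [slope_def_field]
  have hGtend : Tendsto G (nhdsWithin 0 (Ioi 0)) (nhds (-c₀ + ∫ y, y ∂ν)) := by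
    have h0 : Tendsto (fun γ : ℝ => γ) (nhdsWithin (0:ℝ) (Ioi 0)) (nhds 0) :=
      tendsto_id.mono_left nhdsWithin_le_nhds
    have h1 : Tendsto (fun γ : ℝ => γ/2) (nhdsWithin (0:ℝ) (Ioi 0)) (nhds 0) := by
      simpa using h0.div_const 2
    have hGt : Tendsto G (nhdsWithin (0:ℝ) (Ioi 0)) (nhds (0 - c + (∫ y, y ∂ν) - I)) :=
      ((h1.sub tendsto_const_nhds).add hFtend).sub tendsto_const_nhds
    have heq : 0 - c + (∫ y, y ∂ν) - I = -c₀ + ∫ y, y ∂ν := by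
      rw [hc₀]; ring
    rw [heq] at hGt
    exact hGt
  -- the expression equals γ * G γ for γ ∈ (0, s]
  have hexpr : ∀ γ : ℝ, 0 < γ → γ ≤ s →
      (-γ) ^ 2 / 2 + c * (-γ) +
        (∫ y, (Real.exp (γ * y) - 1 + (-γ) * y * (if |y| < 1 then 1 else 0)) ∂ν)
        = γ * G γ := by
    intro γ h0 h1
    rw [hsplit γ h0.le h1]
    have : (∫ y, (Real.exp (γ*y) - 1)/γ ∂ν) = (∫ y, (Real.exp (γ*y) - 1) ∂ν) / γ :=
      integral_div γ _
    simp only [hG]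
    rw [this]
    field_simp
    ring
  -- eventually γ * G γ < θ
  have hev : ∀ᶠ γ in nhdsWithin (0:ℝ) (Ioi 0), γ * G γ < θ := by
    rcases hθ with hpos | ⟨hz, hneg⟩
    · have hmul : Tendsto (fun γ : ℝ => γ * G γ) (nhdsWithin 0 (Ioi 0)) (nhds 0) := by
        have := (tendsto_id.mono_left (nhdsWithin_le_nhds (s := Ioi (0:ℝ)))).mul hGtend
        simpa using this
      exact hmul.eventually_lt_const hpos
    · filter_upwards [hGtend.eventually_lt_const hneg, self_mem_nhdsWithin] with γ h1 h2
      rw [hz]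
      exact mul_neg_of_pos_of_neg h2 h1
  constructor
  · -- existence
    have hall : ∀ᶠ γ in nhdsWithin (0:ℝ) (Ioi 0), 0 < γ ∧ γ < s ∧
        (-γ) ^ 2 / 2 + c * (-γ) +
          (∫ y, (Real.exp (γ * y) - 1 + (-γ) * y * (if |y| < 1 then 1 else 0)) ∂ν) < θ := by
      filter_upwards [hev, Ioc_mem_nhdsGT_of_mem ⟨le_refl (0:ℝ), half_pos hs⟩] with γ h1 h2
      refine ⟨h2.1, by linarith [h2.2], ?_⟩
      rw [hexpr γ h2.1 (by linarith [h2.2])]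
      exact h1
    obtain ⟨γ, hγ⟩ := hall.exists
    exact ⟨γ, hγ⟩
  · -- contraction constant
    intro γ h0 h1 hφ
    have hN : 0 < ∫ y, Real.exp (γ * y) ∂ν := by
      rw [integral_pos_iff_support_of_nonneg_ae
        (Eventually.of_forall fun y => (Real.exp_pos _).le) (hexpInt γ h0.le h1.le)]
      have : Function.support (fun y => Real.exp (γ * y)) = Set.univ := by
        ext y; simp [Function.mem_support, (Real.exp_pos (γ*y)).ne']
      rw [this]
      exact Measure.measure_univ_pos.mpr hν
    set N := ∫ y, Real.exp (γ * y) ∂ν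
    set φγ := (-γ) ^ 2 / 2 + c * (-γ) +
      ∫ y, (Real.exp (γ * y) - 1 + (-γ) * y * (if |y| < 1 then 1 else 0)) ∂ν
    have hND : N < N - φγ + θ := by linarith
    have hD : 0 < N - φγ + θ := lt_trans hN hND
    exact ⟨div_pos hN hD, (div_lt_one hD).mpr hND⟩
end
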